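/- Let p be a prime, d ≥ 0, and let φ : (ℚ_p/ℤ_p)^d → (ℚ_p/ℤ_p)^d be an endomorphism of abelian groups with finite kernel. Then φ is surjective. -/

import Mathlib

/-- The Prüfer group `ℚ_p/ℤ_p`, as the quotient of the additive group of `ℚ_p` by `ℤ_p`. -/
abbrev PruferGroup (p : ℕ) [Fact p.Prime] : Type :=
  ℚ_[p] ⧸ (PadicInt.subring p).toAddSubgroup

open QuotientAddGroup

variable (p : ℕ) [Fact p.Prime]

lemma Prufer.mk_eq_zero {q : ℚ_[p]} (h : ‖q‖ ≤ 1) :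
    (QuotientAddGroup.mk q : PruferGroup p) = 0 := by
  rw [QuotientAddGroup.eq_zero_iff]
  exact h

lemma Prufer.smul_mk (n : ℕ) (q : ℚ_[p]) :
    n • (QuotientAddGroup.mk q : PruferGroup p) = QuotientAddGroup.mk (n • q) := rfl

-- torsion
lemma Prufer.torsion (x : PruferGroup p) : ∃ n : ℕ, p ^ n • x = 0 := by
  induction x using QuotientAddGroup.induction_on with
  | H q =>
    have hp : (1:ℝ) < p := by exact_mod_cast (Fact.out : p.Prime).one_lt
    obtain ⟨n, hn⟩ := pow_unbounded_of_one_lt ‖q‖ hp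
    refine ⟨n, ?_⟩
    rw [Prufer.smul_mk]
    apply Prufer.mk_eq_zero
    have hpq : ‖(p:ℚ_[p])‖ = (p:ℝ)⁻¹ := Padic.norm_p
    have : ((p ^ n : ℕ) • q) = (p:ℚ_[p])^n * q := by push_cast; ring
    rw [this, norm_mul, norm_pow, hpq]
    rw [inv_pow]
    rw [inv_mul_le_iff₀ (by positivity)]
    simpa using hn.le

-- divisibility
lemma Prufer.div (x : PruferGroup p) (m : ℕ) : ∃ y, p ^ m • y = x := by
  induction x using QuotientAddGroup.induction_on with
  | H q =>
    refine ⟨QuotientAddGroup.mk (q / (p:ℚ_[p])^m), ?_⟩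
    rw [Prufer.smul_mk]
    congr 1
    have hp : ((p:ℚ_[p]))^m ≠ 0 :=
      pow_ne_zero _ (Nat.cast_ne_zero.mpr (Fact.out : p.Prime).ne_zero)
    rw [nsmul_eq_mul]
    push_cast
    field_simp

-- finiteness of p^N torsion in Prufer group
lemma Prufer.torsionSet_finite (N : ℕ) :
    {x : PruferGroup p | p ^ N • x = 0}.Finite := by
  have : {x : PruferGroup p | p ^ N • x = 0} ⊆
      (fun k : ℕ => (QuotientAddGroup.mk ((k : ℚ_[p]) / (p:ℚ_[p])^N) : PruferGroup p)) ''
        Set.Iio (p ^ N) := by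
    rintro x hx
    induction x using QuotientAddGroup.induction_on with
    | H q =>
      simp only [Set.mem_setOf_eq, Prufer.smul_mk] at hx
      rw [QuotientAddGroup.eq_zero_iff] at hx
      have hx' : ‖(p:ℚ_[p])^N * q‖ ≤ 1 := by
        have : ((p ^ N : ℕ) • q) = (p:ℚ_[p])^N * q := by push_cast; ring
        rwa [this] at hx
      set z : ℤ_[p] := ⟨(p:ℚ_[p])^N * q, hx'⟩ with hz
      -- q = z / p^N
      have hpN : ((p:ℚ_[p]))^N ≠ 0 :=
        pow_ne_zero _ (Nat.cast_ne_zero.mpr (Fact.out : p.Prime).ne_zero)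
      obtain ⟨c, hc⟩ := Ideal.mem_span_singleton'.mp (PadicInt.appr_spec N z)
      refine ⟨z.appr N, PadicInt.appr_lt z N, ?_⟩
      -- mk (appr / p^N) = mk q
      rw [QuotientAddGroup.eq]
      show ‖-((z.appr N : ℚ_[p]) / (p:ℚ_[p])^N) + q‖ ≤ 1
      have hq : q = (z : ℚ_[p]) / (p:ℚ_[p])^N := by
        field_simp
        rw [hz]; exact mul_comm _ _
      have hzc : (z : ℚ_[p]) - (z.appr N : ℚ_[p]) = (c : ℚ_[p]) * (p:ℚ_[p])^N := by
        have := congrArg (fun t : ℤ_[p] => (t : ℚ_[p])) hc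
        push_cast at this ⊢
        linear_combination -this
      have : -((z.appr N : ℚ_[p]) / (p:ℚ_[p])^N) + q = (c : ℚ_[p]) := by
        rw [hq]
        field_simp
        linear_combination hzc
      rw [this]
      exact c.2
  exact Set.Finite.subset ((Set.finite_Iio _).image _) this

set_option maxHeartbeats 1000000 in
/-- Any additive endomorphism of `(ℚ_p/ℤ_p)^d` with finite kernel is surjective. -/
theorem stmt_7 (p : ℕ) [Fact p.Prime] (d : ℕ)
    (φ : (Fin d → PruferGroup p) →+ (Fin d → PruferGroup p))
    (hker : Finite φ.ker) :
    Function.Surjective φ := by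
  classical
  set G := (Fin d → PruferGroup p) with hG
  have hp1 : 1 < p := (Fact.out : p.Prime).one_lt
  intro y
  -- torsion exponent for y
  have htor : ∃ N : ℕ, p ^ N • y = 0 := by
    choose n hn using fun i => Prufer.torsion p (y i)
    refine ⟨(Finset.univ.sup n), ?_⟩
    funext i
    have : p ^ Finset.univ.sup n • y i = 0 := by
      obtain ⟨c, hc⟩ := pow_dvd_pow p (Finset.le_sup (Finset.mem_univ i))
      rw [hc, mul_comm, mul_smul, hn i, smul_zero]
    simpa using this
  obtain ⟨N, hN⟩ := htor
  -- choose m with Nat.card φ.ker ≤ p ^ m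
  set k := Nat.card φ.ker with hk
  set m := k with hm
  have hkm : k ≤ p ^ m := (Nat.lt_pow_self (n := k) hp1).le
  -- divide y by p^m
  have hdiv : ∃ x : G, p ^ m • x = y := by
    choose x hx using fun i => Prufer.div p (y i) m
    exact ⟨x, funext fun i => hx i⟩
  obtain ⟨x, hx⟩ := hdiv
  set K := N + m with hK
  -- the torsion subgroup A
  set A : AddSubgroup G :=
    { carrier := {g : G | p ^ K • g = 0}
      zero_mem' := by simp
      add_mem' := by
        intro a b ha hb
        simp only [Set.mem_setOf_eq] at ha hb ⊢
        rw [nsmul_add, ha, hb, add_zero]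
      neg_mem' := by
        intro a ha
        simp only [Set.mem_setOf_eq] at ha ⊢
        rw [neg_nsmul, ha, neg_zero] } with hA
  have hmemA : ∀ g : G, g ∈ A ↔ p ^ K • g = 0 := fun g => Iff.rfl
  have hxA : x ∈ A := by
    rw [hmemA, hK, pow_add, mul_smul, hx, hN]
  have hAfin : Finite A := by
    have hsub : (A : Set G) ⊆ Set.pi Set.univ (fun _ : Fin d => {t : PruferGroup p | p ^ K • t = 0}) := by
      intro g hg i _
      have := congrFun ((hmemA g).mp hg) i
      exact this
    exact (Set.Finite.subset (Set.Finite.pi fun _ => Prufer.torsionSet_finite p K) hsub).to_subtype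
  -- φ restricted to A
  have hmap : ∀ a : G, a ∈ A → φ a ∈ A := by
    intro a ha
    rw [hmemA] at ha ⊢
    rw [← map_nsmul, ha, map_zero]
  set ψ : A →+ A := AddMonoidHom.mk' (fun a => ⟨φ a, hmap a a.2⟩)
    (fun a b => by ext : 1; simp [map_add]) with hψ
  haveI : Finite ψ.range := Subtype.finite
  haveI : Finite ψ.ker := Subtype.finite
  haveI : Finite (A ⧸ ψ.range) := Quotient.finite _
  haveI : Nonempty ψ.range := ⟨⟨0, ψ.range.zero_mem⟩⟩
  haveI : Nonempty (A ⧸ ψ.range) := ⟨QuotientAddGroup.mk 0⟩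
  -- counting
  have h1 : Nat.card A = Nat.card (A ⧸ ψ.range) * Nat.card ψ.range :=
    AddSubgroup.card_eq_card_quotient_mul_card_addSubgroup ψ.range
  have h2 : Nat.card (A ⧸ ψ.ker) = Nat.card ψ.range :=
    Nat.card_congr (QuotientAddGroup.quotientKerEquivRange ψ).toEquiv
  have h3 : Nat.card A = Nat.card (A ⧸ ψ.ker) * Nat.card ψ.ker :=
    AddSubgroup.card_eq_card_quotient_mul_card_addSubgroup ψ.ker
  have hrangepos : 0 < Nat.card ψ.range := Nat.card_pos
  have hcardq : Nat.card (A ⧸ ψ.range) = Nat.card ψ.ker := by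
    have : Nat.card (A ⧸ ψ.range) * Nat.card ψ.range = Nat.card ψ.ker * Nat.card ψ.range := by
      rw [← h1, h3, h2]; ring
    exact Nat.eq_of_mul_eq_mul_right hrangepos this
  have hkerle : Nat.card ψ.ker ≤ k := by
    have hinj : Function.Injective (fun a : ψ.ker => (⟨((a : A) : G), by
        have h := AddMonoidHom.mem_ker.mp a.2
        have h2 := congrArg (Subtype.val : A → G) h
        rw [AddMonoidHom.mem_ker]
        exact h2⟩ : φ.ker)) := by
      intro a b hab
      have h := congrArg (Subtype.val : φ.ker → G) hab
      exact Subtype.ext (Subtype.ext h)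
    exact Nat.card_le_card_of_injective _ hinj
  have hqle : Nat.card (A ⧸ ψ.range) ≤ p ^ m := hcardq ▸ le_trans hkerle hkm
  -- order of x in the quotient
  set xq : A ⧸ ψ.range := QuotientAddGroup.mk (⟨x, hxA⟩ : A) with hxq
  have hord1 : addOrderOf xq ∣ p ^ K := by
    rw [addOrderOf_dvd_iff_nsmul_eq_zero]
    have h0 : p ^ K • (⟨x, hxA⟩ : A) = 0 := by
      ext : 1
      exact (hmemA x).mp hxA
    rw [hxq, ← QuotientAddGroup.mk_nsmul, h0, QuotientAddGroup.mk_zero]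
  have hord2 : addOrderOf xq ∣ Nat.card (A ⧸ ψ.range) := addOrderOf_dvd_natCard xq
  obtain ⟨j, hj, hjeq⟩ := (Nat.dvd_prime_pow (Fact.out : p.Prime)).mp hord1
  have hqpos : 0 < Nat.card (A ⧸ ψ.range) := Nat.card_pos
  have hple : p ^ j ≤ p ^ m := le_trans (Nat.le_of_dvd hqpos (hjeq ▸ hord2)) hqle
  have hjm : j ≤ m := (Nat.pow_le_pow_iff_right hp1).mp hple
  have hordm : addOrderOf xq ∣ p ^ m := hjeq ▸ pow_dvd_pow p hjm
  have hzero : p ^ m • xq = 0 := addOrderOf_dvd_iff_nsmul_eq_zero.mp hordm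
  -- conclude
  rw [hxq, ← QuotientAddGroup.mk_nsmul, QuotientAddGroup.eq_zero_iff] at hzero
  obtain ⟨a, ha⟩ := hzero
  refine ⟨(a : G), ?_⟩
  have hval : (ψ a : G) = ((p ^ m • (⟨x, hxA⟩ : A)) : G) := congrArg Subtype.val ha
  have := (by simpa [hx] using hval : (ψ a : G) = y); exact this
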